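/- If U, R, X satisfy I(U;X)=I(U;R)=I(X;R)=0 and H(U|XR)=0, and some probability mass P_U(u) is irrational, then the supports of X and R cannot both be finite (indeed neither can be finite). -/

import Mathlib

open scoped ENNReal

lemma exists_qlinear {x : ℝ} (hx : Irrational x) :
    ∃ L : ℝ →ₗ[ℚ] ℝ, L 1 = 1 ∧ L x ≠ x := by
  classical
  have hne : ∀ a : ℚ, a • (1:ℝ) ≠ x := by
    intro a h
    exact hx ⟨a, by simpa using h⟩
  have hli : LinearIndepOn ℚ id ({1, x} : Set ℝ) :=
    linearIndepOn_id_pair one_ne_zero hne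
  have h1m : (1:ℝ) ∈ hli.extend (Set.subset_univ _) :=
    hli.subset_extend _ (Set.mem_insert _ _)
  have hxm : x ∈ hli.extend (Set.subset_univ _) :=
    hli.subset_extend _ (Set.mem_insert_of_mem _ rfl)
  set B := Module.Basis.extend hli with hB
  set f : hli.extend (Set.subset_univ _) → ℝ :=
    (fun i => if (i : ℝ) = x then x + 1 else (i : ℝ)) with hf
  refine ⟨B.constr ℚ f, ?_, ?_⟩
  · have e : B ⟨1, h1m⟩ = (1:ℝ) := Module.Basis.extend_apply_self hli ⟨1, h1m⟩
    have h1x : ((⟨1, h1m⟩ : hli.extend (Set.subset_univ _)) : ℝ) ≠ x := by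
      intro h
      exact hx ⟨1, by exact_mod_cast h⟩
    have hc := B.constr_basis ℚ f ⟨1, h1m⟩
    rw [e] at hc
    rw [hc, hf]
    simp [h1x]
  · have e : B ⟨x, hxm⟩ = x := Module.Basis.extend_apply_self hli ⟨x, hxm⟩
    have hc := B.constr_basis ℚ f ⟨x, hxm⟩
    rw [e] at hc
    rw [hc, hf]
    simp

lemma key {A B U : Type*} [DecidableEq U] (ν : A → ℝ≥0∞) (μ : B → ℝ≥0∞) (g : A → B → U) (α : U → ℝ≥0∞)
    (hν : ∑' a, ν a = 1) (hμ : ∑' b, μ b = 1)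
    (hrow : ∀ a, ν a ≠ 0 → ∀ u, ∑' b, (if g a b = u then μ b else 0) = α u)
    (hcol : ∀ b, μ b ≠ 0 → ∀ u, ∑' a, (if g a b = u then ν a else 0) = α u)
    (u0 : U) (hirr : Irrational (α u0).toReal) :
    ¬ {a | ν a ≠ 0}.Finite := by
  classical
  intro hfin
  -- a point of positive ν-mass
  have hex : ∃ a, ν a ≠ 0 := by
    by_contra h
    push_neg at h
    rw [tsum_congr h, tsum_zero] at hν
    exact zero_ne_one hν
  obtain ⟨a0, ha0⟩ := hex
  -- total mass of α is 1
  have halpha : ∑' u, α u = 1 := by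
    calc ∑' u, α u = ∑' u, ∑' b, (if g a0 b = u then μ b else 0) :=
          tsum_congr fun u => (hrow a0 ha0 u).symm
      _ = ∑' b, ∑' u, (if g a0 b = u then μ b else 0) := ENNReal.tsum_comm
      _ = ∑' b, μ b := tsum_congr fun b =>
          (tsum_eq_single (g a0 b) fun u hu => if_neg (fun h => hu h.symm)).trans
            (if_pos rfl)
      _ = 1 := hμ

  -- basic finiteness bounds
  have hνtop : ∀ a, ν a ≠ ∞ := fun a =>
    ne_top_of_le_ne_top (hν ▸ ENNReal.one_ne_top) (ENNReal.le_tsum a)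
  have hαtop : ∀ u, α u ≠ ∞ := fun u =>
    ne_top_of_le_ne_top (halpha ▸ ENNReal.one_ne_top) (ENNReal.le_tsum u)
  -- the finite support of ν
  set I : Finset A := hfin.toFinset with hIdef
  have hmemI : ∀ a, a ∈ I ↔ ν a ≠ 0 := fun a => hfin.mem_toFinset
  have hIne : I.Nonempty := ⟨a0, (hmemI a0).2 ha0⟩
  -- minimal mass
  set ε : ℝ≥0∞ := I.inf' hIne ν with hε
  have hεpos : ε ≠ 0 := by
    obtain ⟨a, haI, hae⟩ := Finset.exists_mem_eq_inf' hIne ν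
    rw [hε, hae]
    exact (hmemI a).1 haI
  have hεle : ∀ a ∈ I, ε ≤ ν a := fun a ha => Finset.inf'_le ν ha
  -- colors with mass at least ε form a finite set
  have hUfin : {u | ε ≤ α u}.Finite :=
    ENNReal.finite_const_le_of_tsum_ne_top (halpha ▸ ENNReal.one_ne_top) hεpos
  -- patterns
  set Φ : B → ({a // a ∈ I} → U) := fun b a => g a.1 b with hΦ
  set P : Set ({a // a ∈ I} → U) := {f | ∃ b, μ b ≠ 0 ∧ Φ b = f} with hP
  have hPsub : P ⊆ Set.pi Set.univ (fun _ => {u | ε ≤ α u}) := by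
    rintro f ⟨b, hb, rfl⟩ a _
    have h1 : ν a.1 ≤ α (g a.1 b) := by
      rw [← hcol b hb (g a.1 b)]
      exact le_trans (le_of_eq (if_pos rfl).symm) (ENNReal.le_tsum a.1)
    exact le_trans (hεle a.1 a.2) h1
  have hPfin : P.Finite := (Set.Finite.pi fun _ => hUfin).subset hPsub
  set PF : Finset ({a // a ∈ I} → U) := hPfin.toFinset with hPF
  have hmemPF : ∀ b, μ b ≠ 0 → Φ b ∈ PF := fun b hb =>
    hPfin.mem_toFinset.2 ⟨b, hb, rfl⟩
  -- pattern weights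
  set β : ({a // a ∈ I} → U) → ℝ≥0∞ := fun f => ∑' b, (if Φ b = f then μ b else 0)
    with hβ
  have hβtop : ∀ f, β f ≠ ∞ := by
    intro f
    have : β f ≤ ∑' b, μ b :=
      ENNReal.tsum_le_tsum fun b => by split_ifs <;> simp
    exact ne_top_of_le_ne_top (hμ ▸ ENNReal.one_ne_top) this
  -- (F1)
  have hF1 : ∑ f ∈ PF, β f = 1 := by
    calc ∑ f ∈ PF, β f = ∑' b, ∑ f ∈ PF, (if Φ b = f then μ b else 0) :=
          (Summable.tsum_finsetSum fun _ _ => ENNReal.summable).symm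
      _ = ∑' b, μ b := by
          refine tsum_congr fun b => ?_
          rw [Finset.sum_ite_eq PF (Φ b) (fun _ => μ b)]
          by_cases h : μ b = 0
          · simp [h]
          · rw [if_pos (hmemPF b h)]
      _ = 1 := hμ
  -- (F2) row equations
  have hF2 : ∀ a : {a // a ∈ I}, ∑ f ∈ PF, (if f a = u0 then β f else 0) = α u0 := by
    intro a
    have haν : ν a.1 ≠ 0 := (hmemI a.1).1 a.2
    calc ∑ f ∈ PF, (if f a = u0 then β f else 0)
        = ∑ f ∈ PF, ∑' b, (if Φ b = f then (if f a = u0 then μ b else 0) else 0) := by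
          refine Finset.sum_congr rfl fun f _ => ?_
          by_cases h : f a = u0
          · simp only [if_pos h]
            rfl
          · simp only [if_neg h]
            symm
            simp
      _ = ∑' b, ∑ f ∈ PF, (if Φ b = f then (if f a = u0 then μ b else 0) else 0) :=
          (Summable.tsum_finsetSum fun _ _ => ENNReal.summable).symm
      _ = ∑' b, (if g a.1 b = u0 then μ b else 0) := by
          refine tsum_congr fun b => ?_
          rw [Finset.sum_ite_eq PF (Φ b) (fun f => if f a = u0 then μ b else 0)]
          by_cases h : μ b = 0
          · split_ifs <;> simp [h]
          · rw [if_pos (hmemPF b h)]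
      _ = α u0 := hrow a.1 haν u0
  -- (F3) column equations
  have hF3 : ∀ f ∈ PF, ∑ a : {a // a ∈ I}, (if f a = u0 then ν a.1 else 0) = α u0 := by
    intro f hf
    obtain ⟨b, hb, hfb⟩ := hPfin.mem_toFinset.1 hf
    have h1 : ∑' a : A, (if g a b = u0 then ν a else 0) = α u0 := hcol b hb u0
    have h2 : ∑' a : A, (if g a b = u0 then ν a else 0)
        = ∑ a ∈ I, (if g a b = u0 then ν a else 0) := by
      refine tsum_eq_sum fun a ha => ?_
      have : ν a = 0 := by
        by_contra h
        exact ha ((hmemI a).2 h)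
      simp [this]
    have h3 : ∑ a ∈ I, (if g a b = u0 then ν a else 0)
        = ∑ a : {a // a ∈ I}, (if g a.1 b = u0 then ν a.1 else 0) :=
      (Finset.sum_coe_sort I (fun a => if g a b = u0 then ν a else 0)).symm
    rw [h2, h3] at h1
    rw [← h1]
    refine Finset.sum_congr rfl fun a _ => ?_
    have : f a = g a.1 b := by rw [← hfb]
    rw [this]

  -- pass to real numbers
  have hR1 : ∑ f ∈ PF, (β f).toReal = 1 := by
    rw [← ENNReal.toReal_sum (fun f _ => hβtop f), hF1, ENNReal.toReal_one]
  have hR2 : ∀ a : {a // a ∈ I}, ∑ f ∈ PF, (if f a = u0 then (β f).toReal else 0)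
      = (α u0).toReal := by
    intro a
    have h := congrArg ENNReal.toReal (hF2 a)
    rw [ENNReal.toReal_sum (fun f _ => by split_ifs; exacts [hβtop f, ENNReal.zero_ne_top])]
      at h
    rw [← h]
    refine Finset.sum_congr rfl fun f _ => ?_
    split_ifs <;> simp
  have hR3 : ∀ f ∈ PF, ∑ a : {a // a ∈ I}, (if f a = u0 then (ν a.1).toReal else 0)
      = (α u0).toReal := by
    intro f hf
    have h := congrArg ENNReal.toReal (hF3 f hf)
    rw [ENNReal.toReal_sum (fun a _ => by split_ifs; exacts [hνtop a.1, ENNReal.zero_ne_top])]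
      at h
    rw [← h]
    refine Finset.sum_congr rfl fun a _ => ?_
    split_ifs <;> simp
  have hR4 : ∑ a : {a // a ∈ I}, (ν a.1).toReal = 1 := by
    have h2 : ∑' a : A, ν a = ∑ a ∈ I, ν a :=
      tsum_eq_sum fun a ha => by
        by_contra h
        exact ha ((hmemI a).2 h)
    have h3 : ∑ a ∈ I, ν a = ∑ a : {a // a ∈ I}, ν a.1 :=
      (Finset.sum_coe_sort I ν).symm
    have h4 : ∑ a : {a // a ∈ I}, ν a.1 = 1 := by rw [← h3, ← h2, hν]
    have h5 := congrArg ENNReal.toReal h4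
    rw [ENNReal.toReal_sum (fun a _ => hνtop a.1), ENNReal.toReal_one] at h5
    exact h5
  -- the rational-linear map
  obtain ⟨L, hL1, hLx⟩ := exists_qlinear hirr
  have hR3' : ∀ f ∈ PF, ∑ a : {a // a ∈ I}, (if f a = u0 then L ((ν a.1).toReal) else 0)
      = L ((α u0).toReal) := by
    intro f hf
    have h := congrArg L (hR3 f hf)
    rw [map_sum] at h
    rw [← h]
    refine Finset.sum_congr rfl fun a _ => ?_
    split_ifs <;> simp
  have hR4' : ∑ a : {a // a ∈ I}, L ((ν a.1).toReal) = 1 := by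
    have h := congrArg L hR4
    rw [map_sum] at h
    rw [h, hL1]
  -- double counting
  have hT1 : ∑ f ∈ PF, ∑ a : {a // a ∈ I},
      (if f a = u0 then (β f).toReal * L ((ν a.1).toReal) else 0) = L ((α u0).toReal) := by
    calc ∑ f ∈ PF, ∑ a : {a // a ∈ I},
          (if f a = u0 then (β f).toReal * L ((ν a.1).toReal) else 0)
        = ∑ f ∈ PF, (β f).toReal
            * ∑ a : {a // a ∈ I}, (if f a = u0 then L ((ν a.1).toReal) else 0) := by
          refine Finset.sum_congr rfl fun f _ => ?_
          rw [Finset.mul_sum]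
          refine Finset.sum_congr rfl fun a _ => ?_
          split_ifs <;> simp
      _ = ∑ f ∈ PF, (β f).toReal * L ((α u0).toReal) :=
          Finset.sum_congr rfl fun f hf => by rw [hR3' f hf]
      _ = (∑ f ∈ PF, (β f).toReal) * L ((α u0).toReal) := (Finset.sum_mul _ _ _).symm
      _ = L ((α u0).toReal) := by rw [hR1, one_mul]
  have hT2 : ∑ f ∈ PF, ∑ a : {a // a ∈ I},
      (if f a = u0 then (β f).toReal * L ((ν a.1).toReal) else 0) = (α u0).toReal := by
    rw [Finset.sum_comm]
    calc ∑ a : {a // a ∈ I}, ∑ f ∈ PF,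
          (if f a = u0 then (β f).toReal * L ((ν a.1).toReal) else 0)
        = ∑ a : {a // a ∈ I}, L ((ν a.1).toReal)
            * ∑ f ∈ PF, (if f a = u0 then (β f).toReal else 0) := by
          refine Finset.sum_congr rfl fun a _ => ?_
          rw [Finset.mul_sum]
          refine Finset.sum_congr rfl fun f _ => ?_
          split_ifs <;> ring
      _ = ∑ a : {a // a ∈ I}, L ((ν a.1).toReal) * (α u0).toReal :=
          Finset.sum_congr rfl fun a _ => by rw [hR2 a]
      _ = (∑ a : {a // a ∈ I}, L ((ν a.1).toReal)) * (α u0).toReal :=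
          (Finset.sum_mul _ _ _).symm
      _ = (α u0).toReal := by rw [hR4', one_mul]
  exact hLx (hT1.symm.trans hT2)

/-- If `U, R, X` satisfy `I(U;X) = I(U;R) = I(X;R) = 0` and `H(U|XR) = 0`, and
some probability mass `P_U(u)` is irrational, then neither the support of `X`
nor the support of `R` can be finite. -/
theorem stmt_17 {𝒰 ℛ 𝒳 : Type*} [Countable 𝒰] [Countable ℛ] [Countable 𝒳]
    (p : 𝒰 → ℛ → 𝒳 → ℝ≥0∞)
    (hsum : ∑' u, ∑' r, ∑' x, p u r x = 1)
    -- `I(U;X) = 0`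
    (hIUX : ∀ u x, (∑' r, p u r x)
      = (∑' r, ∑' x', p u r x') * (∑' u', ∑' r, p u' r x))
    -- `I(U;R) = 0`
    (hIUR : ∀ u r, (∑' x, p u r x)
      = (∑' r', ∑' x, p u r' x) * (∑' u', ∑' x, p u' r x))
    -- `I(X;R) = 0`
    (hIXR : ∀ r x, (∑' u, p u r x)
      = (∑' u, ∑' x', p u r x') * (∑' u, ∑' r', p u r' x))
    -- `H(U|XR) = 0` : `U = g(X,R)` almost surely
    (hdet : ∃ g : 𝒳 → ℛ → 𝒰, ∀ u r x, p u r x ≠ 0 → u = g x r)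
    -- some message probability is irrational
    (hirr : ∃ u, Irrational ((∑' r, ∑' x, p u r x).toReal)) :
    ¬ {x : 𝒳 | (∑' u, ∑' r, p u r x) ≠ 0}.Finite
    ∧ ¬ {r : ℛ | (∑' u, ∑' x, p u r x) ≠ 0}.Finite := by
  classical
  obtain ⟨g, hg⟩ := hdet
  obtain ⟨u0, hu0⟩ := hirr
  set PU : 𝒰 → ℝ≥0∞ := fun u => ∑' r, ∑' x, p u r x with hPU
  set PX : 𝒳 → ℝ≥0∞ := fun x => ∑' u, ∑' r, p u r x with hPX
  set PR : ℛ → ℝ≥0∞ := fun r => ∑' u, ∑' x, p u r x with hPR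
  have hXsum : ∑' x, PX x = 1 := by
    rw [hPX, ← hsum, ENNReal.tsum_comm]
    exact tsum_congr fun u => ENNReal.tsum_comm
  have hRsum : ∑' r, PR r = 1 := by
    rw [hPR, ← hsum]
    exact ENNReal.tsum_comm
  have hPXtop : ∀ x, PX x ≠ ∞ := fun x =>
    ne_top_of_le_ne_top (hXsum ▸ ENNReal.one_ne_top) (ENNReal.le_tsum x)
  have hPRtop : ∀ r, PR r ≠ ∞ := fun r =>
    ne_top_of_le_ne_top (hRsum ▸ ENNReal.one_ne_top) (ENNReal.le_tsum r)
  -- the joint law is determined by the marginals and g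
  have hp : ∀ u r x, p u r x = if g x r = u then PR r * PX x else 0 := by
    intro u r x
    by_cases h : g x r = u
    · rw [if_pos h]
      have h1 : ∑' u', p u' r x = PR r * PX x := hIXR r x
      have h2 : ∑' u', p u' r x = p u r x :=
        tsum_eq_single u fun u' hu' => by
          by_contra h0
          exact hu' ((hg u' r x h0).trans h)
      rw [← h2, h1]
    · rw [if_neg h]
      by_contra h0
      exact h ((hg u r x h0).symm)
  -- row equations for X
  have hrowX : ∀ x, PX x ≠ 0 → ∀ u, ∑' r, (if g x r = u then PR r else 0) = PU u := by
    intro x hx u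
    have h1 : ∑' r, p u r x = PU u * PX x := hIUX u x
    have h2 : ∑' r, p u r x = (∑' r, (if g x r = u then PR r else 0)) * PX x := by
      rw [← ENNReal.tsum_mul_right]
      refine tsum_congr fun r => ?_
      rw [hp u r x, ite_mul, zero_mul]
    exact ((ENNReal.mul_left_inj hx (hPXtop x)).mp (h2.symm.trans h1)).symm ▸ rfl
  -- column equations for X / row equations for R
  have hrowR : ∀ r, PR r ≠ 0 → ∀ u, ∑' x, (if g x r = u then PX x else 0) = PU u := by
    intro r hr u
    have h1 : ∑' x, p u r x = PU u * PR r := hIUR u r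
    have h2 : ∑' x, p u r x = PR r * ∑' x, (if g x r = u then PX x else 0) := by
      rw [← ENNReal.tsum_mul_left]
      refine tsum_congr fun x => ?_
      rw [hp u r x, mul_ite, mul_zero]
    rw [h2, mul_comm (PU u) (PR r)] at h1
    exact (ENNReal.mul_right_inj hr (hPRtop r)).mp h1
  constructor
  · exact key PX PR (fun x r => g x r) PU hXsum hRsum hrowX hrowR u0 hu0
  · exact key PR PX (fun r x => g x r) PU hRsum hXsum hrowR hrowX u0 hu0
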